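/- With κ and r^w as above, for every y = Σ_w y_w τ_w ∈ ℝW one has ‖κ·y‖_q ≤ ‖κ‖²_q · ‖y‖_q; hence left multiplication by κ extends to a bounded operator on L²_q W. -/

import Mathlib

/-! Setup: `DihedralGroup 0` is the infinite dihedral group W with generators
s = sr 0 and t = sr 1; `dihLen` is the Coxeter word length; `dihProd a b w` is
the product of a's and b's along the reduced expression of w (so
`dihProd qs qt = q^w`, `dihProd rs rt = r^w`); `dihWord w` is the reduced word
of w (`true` = s, `false` = t).  H plays the role of L²_q W with Hecke basis
vectors τ_w; Rs, Rt are right multiplication by τ_s, τ_t and `Rop Rs Rt w` is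
right multiplication by τ_w.  For y = Σ_w y_w τ_w ∈ ℝW (finitely supported),
κ·y = Σ_w y_w κτ_w = Σ_w y_w (τ_w·κ) since κ is central, and
‖y‖_q² = Σ_w y_w² q^w. -/

def zmodToInt (n : ZMod 0) : ℤ := n

def dihLen : DihedralGroup 0 → ℕ
  | .r n => 2 * (zmodToInt n).natAbs
  | .sr k => if zmodToInt k ≤ 0 then 2 * (zmodToInt k).natAbs + 1
             else 2 * (zmodToInt k).natAbs - 1

def dihProd (a b : ℝ) : DihedralGroup 0 → ℝ
  | .r n => (a * b) ^ (zmodToInt n).natAbs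
  | .sr k => if zmodToInt k ≤ 0 then a ^ ((zmodToInt k).natAbs + 1) * b ^ (zmodToInt k).natAbs
             else a ^ ((zmodToInt k).natAbs - 1) * b ^ (zmodToInt k).natAbs

def altWord : Bool → ℕ → List Bool
  | _, 0 => []
  | b, n + 1 => b :: altWord (!b) n

def dihWord : DihedralGroup 0 → List Bool
  | .r n => if 0 ≤ zmodToInt n then altWord true (2 * (zmodToInt n).natAbs)
            else altWord false (2 * (zmodToInt n).natAbs)
  | .sr k => if zmodToInt k ≤ 0 then altWord true (2 * (zmodToInt k).natAbs + 1)
             else altWord false (2 * (zmodToInt k).natAbs - 1)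

def Rop {H : Type*} [NormedAddCommGroup H] [Module ℝ H]
    (Rs Rt : H →L[ℝ] H) (w : DihedralGroup 0) : H →L[ℝ] H :=
  (dihWord w).foldl (fun acc b => (if b then Rs else Rt).comp acc) 1

/-- For κ = Σ_w r^w τ_w with κτ_w = q^w r^w κ: for every y ∈ ℝW one has
‖κ·y‖_q ≤ ‖κ‖²_q ‖y‖_q, hence left multiplication by κ extends to a bounded
operator on L²_q W. -/
theorem kappa_bounded (qs qt rs rt : ℝ) (hqs : 0 < qs) (hqt : 0 < qt)
    {H : Type*} [NormedAddCommGroup H] [InnerProductSpace ℝ H] [CompleteSpace H]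
    (τ : DihedralGroup 0 → H)
    (hinner : ∀ w w' : DihedralGroup 0,
      inner (𝕜 := ℝ) (τ w) (τ w') = if w = w' then dihProd qs qt w else 0)
    (Rs Rt : H →L[ℝ] H)
    (hRs : ∀ w : DihedralGroup 0,
      Rs (τ w) = if dihLen (w * DihedralGroup.sr 0) > dihLen w
        then τ (w * DihedralGroup.sr 0)
        else (qs - 1) • τ w + qs • τ (w * DihedralGroup.sr 0))
    (hRt : ∀ w : DihedralGroup 0,
      Rt (τ w) = if dihLen (w * DihedralGroup.sr 1) > dihLen w
        then τ (w * DihedralGroup.sr 1)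
        else (qt - 1) • τ w + qt • τ (w * DihedralGroup.sr 1))
    (hsum : Summable fun w => dihProd rs rt w • τ w)
    (κ : H) (hκ : κ = ∑' w, dihProd rs rt w • τ w)
    (hκτ : ∀ w : DihedralGroup 0,
      Rop Rs Rt w κ = (dihProd qs qt w * dihProd rs rt w) • κ) :
    (∀ y : DihedralGroup 0 →₀ ℝ,
      ‖y.sum fun w c => c • Rop Rs Rt w κ‖ ≤
        ‖κ‖ ^ 2 * Real.sqrt (y.sum fun w c => c ^ 2 * dihProd qs qt w)) ∧
    ∃ K : H →L[ℝ] H, ∀ w : DihedralGroup 0, K (τ w) = Rop Rs Rt w κ := by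
    classical
  set q : DihedralGroup 0 → ℝ := dihProd qs qt with hq
  set rr : DihedralGroup 0 → ℝ := dihProd rs rt with hrr
  have hqpos : ∀ w, 0 < q w := by
    intro w
    cases w with
    | r n => simp only [hq, dihProd]; positivity
    | sr k => simp only [hq, dihProd]; split_ifs <;> positivity
  -- inner product of κ with τ w
  have hκin : ∀ w, (inner ℝ (κ) (τ w) : ℝ) = q w * rr w := by
    intro w
    have h1 : (inner ℝ (τ w) κ : ℝ) = q w * rr w := by
      rw [hκ]
      have := ContinuousLinearMap.map_tsum (innerSL ℝ (τ w)) hsum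
      simp only [innerSL_apply_apply] at this
      rw [this]
      have heq : ∀ w', (inner ℝ (τ w) (rr w' • τ w') : ℝ) =
          if w' = w then q w * rr w else 0 := by
        intro w'
        rw [real_inner_smul_right, hinner]
        by_cases h : w = w'
        · subst h; simp [mul_comm]
        · simp [h, Ne.symm h]
      calc (∑' w', (inner ℝ (τ w) (rr w' • τ w') : ℝ))
          = ∑' w', if w' = w then q w * rr w else 0 := by
            exact tsum_congr heq
        _ = q w * rr w := by
            rw [tsum_eq_single w (fun b hb => by simp [hb])]; simp
    rw [real_inner_comm]; exact h1
  -- orthonormal family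
  have hON : Orthonormal ℝ (fun w => (Real.sqrt (q w))⁻¹ • τ w) := by
    rw [orthonormal_iff_ite]
    intro i j
    rw [real_inner_smul_left, real_inner_smul_right, hinner]
    by_cases h : i = j
    · subst h
      have hs : Real.sqrt (q i) ≠ 0 := ne_of_gt (Real.sqrt_pos.mpr (hqpos i))
      simp only [if_pos rfl, if_true]
      rw [show ((Real.sqrt (q i))⁻¹ * ((Real.sqrt (q i))⁻¹ * q i))
          = q i / (Real.sqrt (q i) * Real.sqrt (q i)) by ring,
        Real.mul_self_sqrt (hqpos i).le, div_self (ne_of_gt (hqpos i))]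
    · simp [h]
  constructor
  · intro y
    set S : ℝ := ∑ w ∈ y.support, y w * (q w * rr w) with hS
    have hsum_eq : (y.sum fun w c => c • Rop Rs Rt w κ) = S • κ := by
      rw [Finsupp.sum]
      rw [hS, Finset.sum_smul]
      refine Finset.sum_congr rfl fun w _ => ?_
      rw [hκτ w, smul_smul]
    set A : ℝ := ∑ w ∈ y.support, (y w) ^ 2 * q w with hA
    have hA0 : 0 ≤ A := Finset.sum_nonneg fun w _ => by
      have := (hqpos w).le; positivity
    have hB : ∑ w ∈ y.support, q w * (rr w) ^ 2 ≤ ‖κ‖ ^ 2 := by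
      have hb := hON.sum_inner_products_le (𝕜 := ℝ) (s := y.support) κ
      refine le_trans (le_of_eq ?_) hb
      refine Finset.sum_congr rfl fun w _ => ?_
      rw [real_inner_comm, real_inner_smul_right, hκin]
      have hs : Real.sqrt (q w) ≠ 0 := ne_of_gt (Real.sqrt_pos.mpr (hqpos w))
      rw [Real.norm_eq_abs, sq_abs]
      have : (Real.sqrt (q w))⁻¹ * (q w * rr w) = Real.sqrt (q w) * rr w := by
        rw [← Real.mul_self_sqrt (hqpos w).le]
        field_simp
        rw [Real.sq_sqrt (sq_nonneg _)]
      rw [this, mul_pow, Real.sq_sqrt (hqpos w).le]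
    have hCS : S ^ 2 ≤ A * (∑ w ∈ y.support, q w * (rr w) ^ 2) := by
      have := Finset.sum_mul_sq_le_sq_mul_sq y.support
        (fun w => y w * Real.sqrt (q w)) (fun w => Real.sqrt (q w) * rr w)
      refine le_trans (le_of_eq ?_) (le_trans this (le_of_eq ?_))
      · rw [hS]
        congr 1
        refine Finset.sum_congr rfl fun w _ => ?_
        rw [show y w * Real.sqrt (q w) * (Real.sqrt (q w) * rr w)
            = y w * (Real.sqrt (q w) * Real.sqrt (q w) * rr w) by ring,
          Real.mul_self_sqrt (hqpos w).le]
      · congr 1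
        · refine Finset.sum_congr rfl fun w _ => ?_
          rw [mul_pow, Real.sq_sqrt (hqpos w).le]
        · refine Finset.sum_congr rfl fun w _ => ?_
          rw [mul_pow, Real.sq_sqrt (hqpos w).le]
    have hS2 : S ^ 2 ≤ A * ‖κ‖ ^ 2 := by
      refine le_trans hCS ?_
      exact mul_le_mul_of_nonneg_left hB hA0
    have habs : |S| ≤ Real.sqrt A * ‖κ‖ := by
      have h1 : |S| = Real.sqrt (S ^ 2) := (Real.sqrt_sq_eq_abs S).symm
      rw [h1]
      calc Real.sqrt (S ^ 2) ≤ Real.sqrt (A * ‖κ‖ ^ 2) := Real.sqrt_le_sqrt hS2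
        _ = Real.sqrt A * ‖κ‖ := by
            rw [Real.sqrt_mul hA0, Real.sqrt_sq (norm_nonneg κ)]
    have hAeq : (y.sum fun w c => c ^ 2 * q w) = A := rfl
    rw [hsum_eq, norm_smul, Real.norm_eq_abs, hAeq]
    calc |S| * ‖κ‖ ≤ (Real.sqrt A * ‖κ‖) * ‖κ‖ :=
          mul_le_mul_of_nonneg_right habs (norm_nonneg κ)
      _ = ‖κ‖ ^ 2 * Real.sqrt A := by ring
  · refine ⟨(innerSL ℝ κ).smulRight κ, fun w => ?_⟩
    simp only [ContinuousLinearMap.smulRight_apply, innerSL_apply_apply]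
    rw [hκin w, hκτ w]
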